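/- Let μ be a real-valued function on effects of a finite-dimensional complex Hilbert space that is countably additive (μ(∑ᵢ Aᵢ) = ∑ᵢ μ(Aᵢ) whenever the effects Aᵢ satisfy ∑ᵢ Aᵢ ≤ I) and non-negative. Then for any fixed effect A, the map t ↦ μ(tA) on [0,1] is continuous at every point: for every r ∈ [0,1], lim_{q→r, q∈ℚ∩[0,1]} μ(qA) = μ(rA). -/

import Mathlib

open Matrix
open scoped ComplexOrder

/-- `A` is an effect: `0 ≤ A ≤ I`. -/
def IsEffect {d : ℕ} (A : Matrix (Fin d) (Fin d) ℂ) : Prop :=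
  A.PosSemidef ∧ (1 - A).PosSemidef

lemma psd_add {d : ℕ} {X Y : Matrix (Fin d) (Fin d) ℂ}
    (hX : X.PosSemidef) (hY : Y.PosSemidef) : (X + Y).PosSemidef := by
  refine ⟨hX.1.add hY.1, fun x => ?_⟩
  simpa [mul_add, add_mul] using add_nonneg (hX.2 x) (hY.2 x)

lemma psd_smul {d : ℕ} {X : Matrix (Fin d) (Fin d) ℂ}
    (hX : X.PosSemidef) {c : ℝ} (hc : 0 ≤ c) : ((c : ℂ) • X).PosSemidef := by
  refine ⟨?_, fun x => ?_⟩
  · unfold Matrix.IsHermitian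
    rw [conjTranspose_smul, hX.1.eq]
    simp [Complex.conj_ofReal]
  · exact (hX.smul (by exact_mod_cast hc : (0 : ℂ) ≤ (c : ℂ))).2 x

lemma effect_smul {d : ℕ} {A : Matrix (Fin d) (Fin d) ℂ} (hA : IsEffect A)
    {c : ℝ} (h0 : 0 ≤ c) (h1 : c ≤ 1) : IsEffect ((c : ℂ) • A) := by
  refine ⟨psd_smul hA.1 h0, ?_⟩
  have key : (1 : Matrix (Fin d) (Fin d) ℂ) - (c : ℂ) • A
      = ((1 - c : ℝ) : ℂ) • A + (1 - A) := by
    push_cast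
    module
  rw [key]
  exact psd_add (psd_smul hA.1 (by linarith)) hA.2

theorem stmt_12 (d : ℕ) (μ : Matrix (Fin d) (Fin d) ℂ → ℝ)
    (hadd : ∀ A : ℕ → Matrix (Fin d) (Fin d) ℂ,
      (∀ i, IsEffect (A i)) → Summable A → (1 - ∑' i, A i).PosSemidef →
      HasSum (fun i => μ (A i)) (μ (∑' i, A i)))
    (hnn : ∀ A : Matrix (Fin d) (Fin d) ℂ, IsEffect A → 0 ≤ μ A) :
    ∀ A : Matrix (Fin d) (Fin d) ℂ, IsEffect A →
      ∀ r : ℝ, r ∈ Set.Icc (0 : ℝ) 1 →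
        ∀ ε > (0 : ℝ), ∃ δ > (0 : ℝ), ∀ q : ℚ,
          (q : ℝ) ∈ Set.Icc (0 : ℝ) 1 → |(q : ℝ) - r| < δ →
          |μ (((q : ℝ) : ℂ) • A) - μ ((r : ℂ) • A)| < ε := by
  intro A hA r hr ε hε
  have hone : IsEffect (0 : Matrix (Fin d) (Fin d) ℂ) :=
    ⟨Matrix.PosSemidef.zero, by simpa using Matrix.PosSemidef.one⟩
  -- μ 0 = 0
  have hμ0 : μ 0 = 0 := by
    have h := hadd (fun _ => 0) (fun _ => hone) summable_zero (by simpa using Matrix.PosSemidef.one)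
    rw [tsum_zero] at h
    have h2 := h.summable.tendsto_atTop_zero
    exact tendsto_nhds_unique tendsto_const_nhds h2
  -- finite additivity
  have hAdd : ∀ X Y : Matrix (Fin d) (Fin d) ℂ, IsEffect X → IsEffect Y →
      (1 - (X + Y)).PosSemidef → μ (X + Y) = μ X + μ Y := by
    intro X Y hX hY hXY
    set B : ℕ → Matrix (Fin d) (Fin d) ℂ := fun i => if i = 0 then X else if i = 1 then Y else 0
      with hB
    have hBe : ∀ i, IsEffect (B i) := by
      intro i
      rcases i with _ | _ | i <;> simpa [hB] using ‹_›
    have hBz : ∀ i ∉ ({0, 1} : Finset ℕ), B i = 0 := by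
      intro i hi
      simp only [Finset.mem_insert, Finset.mem_singleton, not_or] at hi
      simp [hB, hi.1, hi.2]
    have hBsum : HasSum B (X + Y) := by
      have := hasSum_sum_of_ne_finset_zero (L := SummationFilter.unconditional ℕ) hBz
      simpa [hB] using this
    have h := hadd B hBe hBsum.summable (by rw [hBsum.tsum_eq]; exact hXY)
    rw [hBsum.tsum_eq] at h
    have h2 : HasSum (fun i => μ (B i)) (μ X + μ Y) := by
      have := hasSum_sum_of_ne_finset_zero (L := SummationFilter.unconditional ℕ) (s := ({0,1} : Finset ℕ))
        (f := fun i => μ (B i)) (fun i hi => by simp only [hBz i hi, hμ0])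
      simpa [hB] using this
    exact h.unique h2
  -- monotonicity step: μ(t•A) - μ(s•A) = μ((t-s)•A)
  have hdiff : ∀ s t : ℝ, 0 ≤ s → s ≤ t → t ≤ 1 →
      μ ((t : ℂ) • A) - μ ((s : ℂ) • A) = μ (((t - s : ℝ) : ℂ) • A) := by
    intro s t h0 hst h1
    have hsplit : (t : ℂ) • A = (s : ℂ) • A + ((t - s : ℝ) : ℂ) • A := by
      push_cast; module
    have := hAdd ((s : ℂ) • A) (((t - s : ℝ) : ℂ) • A)
      (effect_smul hA h0 (by linarith)) (effect_smul hA (by linarith) (by linarith))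
      (by rw [← hsplit]; exact (effect_smul hA (by linarith) h1).2)
    rw [hsplit, this]; ring
  have hMono : ∀ s t : ℝ, 0 ≤ s → s ≤ t → t ≤ 1 →
      μ ((s : ℂ) • A) ≤ μ ((t : ℂ) • A) := by
    intro s t h0 hst h1
    have := hdiff s t h0 hst h1
    have hn := hnn _ (effect_smul hA (c := t - s) (by linarith) (by linarith))
    linarith
  -- the geometric series
  have hgeo : HasSum (fun i : ℕ => ((2 : ℂ)⁻¹) ^ (i + 1)) 1 := by
    have h := hasSum_geometric_of_norm_lt_one (ξ := (2 : ℂ)⁻¹) (by norm_num)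
    have h2 := h.mul_left ((2 : ℂ)⁻¹)
    have : (2 : ℂ)⁻¹ * (1 - (2 : ℂ)⁻¹)⁻¹ = 1 := by norm_num
    rw [this] at h2
    simpa [pow_succ'] using h2
  have hsumA : HasSum (fun i : ℕ => μ ((((2 : ℝ)⁻¹) ^ (i + 1) : ℂ) • A)) (μ A) := by
    have hMsum : HasSum (fun i : ℕ => ((((2 : ℝ)⁻¹) ^ (i + 1) : ℝ) : ℂ) • A) A := by
      have := hgeo.smul_const A
      rw [one_smul] at this
      convert this using 2 with i
      push_cast
      ring_nf
    have heff : ∀ i : ℕ, IsEffect (((((2 : ℝ)⁻¹) ^ (i + 1) : ℝ) : ℂ) • A) := fun i =>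
      effect_smul hA (by positivity)
        (by
          calc ((2 : ℝ)⁻¹) ^ (i + 1) ≤ 1 ^ (i + 1) := by
                exact pow_le_pow_left₀ (by norm_num) (by norm_num) _
            _ = 1 := one_pow _)
    have h := hadd _ heff hMsum.summable (by rw [hMsum.tsum_eq]; exact hA.2)
    rw [hMsum.tsum_eq] at h
    convert h using 3 with i
    push_cast
    ring_nf
  -- pick n with μ((2⁻¹)^(n+1) • A) < ε
  have htend := hsumA.summable.tendsto_atTop_zero
  obtain ⟨n, hn⟩ := (htend.eventually (eventually_lt_nhds hε)).exists
  refine ⟨((2 : ℝ)⁻¹) ^ (n + 1), by positivity, ?_⟩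
  set δ : ℝ := ((2 : ℝ)⁻¹) ^ (n + 1) with hδ
  have hδ1 : δ ≤ 1 := by
    calc δ ≤ 1 ^ (n + 1) := pow_le_pow_left₀ (by norm_num) (by norm_num) _
      _ = 1 := one_pow _
  intro q hq hqr
  have hq0 : (0 : ℝ) ≤ q := hq.1
  have hq1 : (q : ℝ) ≤ 1 := hq.2
  have key : ∀ s t : ℝ, 0 ≤ s → s ≤ t → t ≤ 1 → t - s < δ →
      μ ((t : ℂ) • A) - μ ((s : ℂ) • A) < ε := by
    intro s t h0 hst h1 hts
    rw [hdiff s t h0 hst h1]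
    have hδc : ((δ : ℝ) : ℂ) = ((((2 : ℝ)⁻¹ : ℝ)) : ℂ) ^ (n + 1) := by
      rw [hδ, Complex.ofReal_pow]
    calc μ (((t - s : ℝ) : ℂ) • A) ≤ μ ((δ : ℂ) • A) :=
          hMono (t - s) δ (by linarith) (le_of_lt hts) hδ1
      _ < ε := by rw [hδc]; exact hn
  rcases le_total (q : ℝ) r with h | h
  · rw [abs_sub_comm, abs_of_nonneg (by linarith [hMono q r hq0 h hr.2])]
    have : r - (q : ℝ) < δ := by
      have := abs_lt.mp hqr
      linarith [this.1]
    exact key (q : ℝ) r hq0 h hr.2 this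
  · rw [abs_of_nonneg (by linarith [hMono r (q : ℝ) hr.1 h hq1])]
    have : (q : ℝ) - r < δ := (abs_lt.mp hqr).2
    exact key r (q : ℝ) hr.1 h hq1 this
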